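/- Let 0 < ε₁ < ε₂ < ε₃ and let 𝒩(η) = 1 − q₀*(η) + q₁*(η) with q₀*(η) = η₁²(1/ε₂+1/ε₃) + η₂²(1/ε₁+1/ε₃) + η₃²(1/ε₁+1/ε₂) and q₁*(η) = (ε₁η₁²+ε₂η₂²+ε₃η₃²)(η₁²+η₂²+η₃²)/(ε₁ε₂ε₃). Then a point η ∈ ℝ³ satisfies 𝒩(η)=0 and ∇𝒩(η)=0 if and only if η₂ = 0, η₁² = ε₃(ε₁−ε₂)/(ε₁−ε₃) and η₃² = ε₁(ε₃−ε₂)/(ε₃−ε₁). In particular there are exactly four such singular points. -/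

import Mathlib

/-- The (normalized) Fresnel polynomial `𝒩(η) = 1 - q₀*(η) + q₁*(η)`. -/
noncomputable def fresnelN (ε₁ ε₂ ε₃ : ℝ) (η : Fin 3 → ℝ) : ℝ :=
  1 - ((η 0) ^ 2 * (1 / ε₂ + 1 / ε₃) + (η 1) ^ 2 * (1 / ε₁ + 1 / ε₃)
      + (η 2) ^ 2 * (1 / ε₁ + 1 / ε₂))
    + (ε₁ * (η 0) ^ 2 + ε₂ * (η 1) ^ 2 + ε₃ * (η 2) ^ 2)
      * ((η 0) ^ 2 + (η 1) ^ 2 + (η 2) ^ 2) / (ε₁ * ε₂ * ε₃)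

lemma fresnel_fderiv_apply (ε₁ ε₂ ε₃ : ℝ) (η v : Fin 3 → ℝ) :
    fderiv ℝ (fresnelN ε₁ ε₂ ε₃) η v =
      (2 * η 0 * (-(1/ε₂ + 1/ε₃) + (ε₁*((η 0)^2+(η 1)^2+(η 2)^2) + (ε₁*(η 0)^2+ε₂*(η 1)^2+ε₃*(η 2)^2))/(ε₁*ε₂*ε₃))) * v 0
    + (2 * η 1 * (-(1/ε₁ + 1/ε₃) + (ε₂*((η 0)^2+(η 1)^2+(η 2)^2) + (ε₁*(η 0)^2+ε₂*(η 1)^2+ε₃*(η 2)^2))/(ε₁*ε₂*ε₃))) * v 1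
    + (2 * η 2 * (-(1/ε₁ + 1/ε₂) + (ε₃*((η 0)^2+(η 1)^2+(η 2)^2) + (ε₁*(η 0)^2+ε₂*(η 1)^2+ε₃*(η 2)^2))/(ε₁*ε₂*ε₃))) * v 2 := by
  have sq : ∀ i : Fin 3, HasFDerivAt (fun η : Fin 3 → ℝ => η i ^ 2)
      ((2 * η i) • ContinuousLinearMap.proj (R := ℝ) (φ := fun _ : Fin 3 => ℝ) i) η := by
    intro i
    have hp : HasFDerivAt (fun η : Fin 3 → ℝ => η i)
        (ContinuousLinearMap.proj (R := ℝ) (φ := fun _ : Fin 3 => ℝ) i) η :=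
      (ContinuousLinearMap.proj (R := ℝ) (φ := fun _ : Fin 3 => ℝ) i).hasFDerivAt
    have h := hp.mul hp
    simp only [pow_two]
    refine HasFDerivAt.congr_fderiv h ?_
    ext w
    simp
    ring
  have h0 := sq 0
  have h1 := sq 1
  have h2 := sq 2
  have hq0 := ((h0.mul_const (1/ε₂ + 1/ε₃)).add (h1.mul_const (1/ε₁ + 1/ε₃))).add
      (h2.mul_const (1/ε₁ + 1/ε₂))
  have hQ := ((h0.const_mul ε₁).add (h1.const_mul ε₂)).add (h2.const_mul ε₃)
  have hS := (h0.add h1).add h2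
  have hq1 := (hQ.mul hS).mul_const (ε₁*ε₂*ε₃)⁻¹
  have hN := ((hasFDerivAt_const (1:ℝ) η).sub hq0).add hq1
  rw [show fresnelN ε₁ ε₂ ε₃ = (fun η : Fin 3 → ℝ =>
    1 - ((η 0) ^ 2 * (1 / ε₂ + 1 / ε₃) + (η 1) ^ 2 * (1 / ε₁ + 1 / ε₃)
      + (η 2) ^ 2 * (1 / ε₁ + 1 / ε₂))
    + (ε₁ * (η 0) ^ 2 + ε₂ * (η 1) ^ 2 + ε₃ * (η 2) ^ 2)
      * ((η 0) ^ 2 + (η 1) ^ 2 + (η 2) ^ 2) * (ε₁ * ε₂ * ε₃)⁻¹) from by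
    funext η; unfold fresnelN; ring]
  erw [hN.fderiv]
  simp [ContinuousLinearMap.proj]
  ring

lemma fresnel_core (ε₁ ε₂ ε₃ x y z : ℝ) (h₀ : 0 < ε₁) (h₁₂ : ε₁ < ε₂) (h₂₃ : ε₂ < ε₃)
    (hx : 0 ≤ x) (hy : 0 ≤ y) (hz : 0 ≤ z)
    (hN : ε₁*ε₂*ε₃ - (x*ε₁*(ε₂+ε₃) + y*ε₂*(ε₁+ε₃) + z*ε₃*(ε₁+ε₂))
        + (ε₁*x+ε₂*y+ε₃*z)*(x+y+z) = 0)
    (e1 : x = 0 ∨ ε₁*(x+y+z) + (ε₁*x+ε₂*y+ε₃*z) = ε₁*(ε₂+ε₃))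
    (e2 : y = 0 ∨ ε₂*(x+y+z) + (ε₁*x+ε₂*y+ε₃*z) = ε₂*(ε₁+ε₃))
    (e3 : z = 0 ∨ ε₃*(x+y+z) + (ε₁*x+ε₂*y+ε₃*z) = ε₃*(ε₁+ε₂)) :
    y = 0 ∧ x = ε₃*(ε₁-ε₂)/(ε₁-ε₃) ∧ z = ε₁*(ε₃-ε₂)/(ε₃-ε₁) := by
  have h02 : 0 < ε₂ := h₀.trans h₁₂
  have h03 : 0 < ε₃ := h02.trans h₂₃
  have h13 : ε₁ < ε₃ := h₁₂.trans h₂₃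
  have n12 : ε₁ - ε₂ ≠ 0 := sub_ne_zero.mpr h₁₂.ne
  have n13 : ε₁ - ε₃ ≠ 0 := sub_ne_zero.mpr h13.ne
  have n23 : ε₂ - ε₃ ≠ 0 := sub_ne_zero.mpr h₂₃.ne
  rcases e1 with hx0 | F1
  · rcases e2 with hy0 | F2
    · rcases e3 with hz0 | F3
      · exfalso; rw [hx0, hy0, hz0] at hN; nlinarith [mul_pos (mul_pos h₀ h02) h03]
      · exfalso
        rw [hx0, hy0] at hN F3
        have h2 : 2*z = ε₁+ε₂ := by
          have h : ε₃ * (2*z - (ε₁+ε₂)) = 0 := by linear_combination F3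
          rcases mul_eq_zero.1 h with h | h
          · exact absurd h h03.ne'
          · linarith
        have hq : ε₁*ε₂ = z^2 := by
          have h : ε₃ * (ε₁*ε₂ - z^2) = 0 := by linear_combination hN - z*ε₃*h2
          rcases mul_eq_zero.1 h with h | h
          · exact absurd h h03.ne'
          · linarith
        nlinarith [sq_nonneg (ε₁ - ε₂)]
    · rcases e3 with hz0 | F3
      · exfalso
        rw [hx0, hz0] at hN F2
        have h2 : 2*y = ε₁+ε₃ := by
          have h : ε₂ * (2*y - (ε₁+ε₃)) = 0 := by linear_combination F2
          rcases mul_eq_zero.1 h with h | h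
          · exact absurd h h02.ne'
          · linarith
        have hq : ε₁*ε₃ = y^2 := by
          have h : ε₂ * (ε₁*ε₃ - y^2) = 0 := by linear_combination hN - y*ε₂*h2
          rcases mul_eq_zero.1 h with h | h
          · exact absurd h h02.ne'
          · linarith
        nlinarith [sq_nonneg (ε₁ - ε₃)]
      · exfalso
        rw [hx0] at F2 F3
        have hS : y + z = ε₁ := by
          have h : (ε₂ - ε₃) * ((y + z) - ε₁) = 0 := by linear_combination F2 - F3
          rcases mul_eq_zero.1 h with h | h
          · exact absurd h n23
          · linarith [sub_eq_zero.1 h]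
        have hQ : ε₂*y + ε₃*z = ε₂*ε₃ := by linear_combination F2 - ε₂ * hS
        have hyneg : y * (ε₃ - ε₂) = -(ε₃ * (ε₂ - ε₁)) := by
          linear_combination ε₃ * hS - hQ
        nlinarith [mul_nonneg hy (le_of_lt (sub_pos.2 h₂₃)), mul_pos h03 (sub_pos.2 h₁₂)]
  · rcases e2 with hy0 | F2
    · rcases e3 with hz0 | F3
      · exfalso
        rw [hy0, hz0] at hN F1
        have h2 : 2*x = ε₂+ε₃ := by
          have h : ε₁ * (2*x - (ε₂+ε₃)) = 0 := by linear_combination F1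
          rcases mul_eq_zero.1 h with h | h
          · exact absurd h h₀.ne'
          · linarith
        have hq : ε₂*ε₃ = x^2 := by
          have h : ε₁ * (ε₂*ε₃ - x^2) = 0 := by linear_combination hN - x*ε₁*h2
          rcases mul_eq_zero.1 h with h | h
          · exact absurd h h₀.ne'
          · linarith
        nlinarith [sq_nonneg (ε₂ - ε₃)]
      · subst hy0
        have hS : x + z = ε₂ := by
          have h : (ε₁ - ε₃) * ((x + z) - ε₂) = 0 := by linear_combination F1 - F3
          rcases mul_eq_zero.1 h with h | h
          · exact absurd h n13
          · linarith [sub_eq_zero.1 h]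
        have hQ : ε₁*x + ε₃*z = ε₁*ε₃ := by linear_combination F1 - ε₁ * hS
        refine ⟨rfl, ?_, ?_⟩
        · rw [eq_div_iff n13]; linear_combination hQ - ε₃ * hS
        · rw [eq_div_iff (sub_ne_zero.mpr h13.ne')]; linear_combination hQ - ε₁ * hS
    · rcases e3 with hz0 | F3
      · exfalso
        rw [hz0] at F1 F2
        have hS : x + y = ε₃ := by
          have h : (ε₁ - ε₂) * ((x + y) - ε₃) = 0 := by linear_combination F1 - F2
          rcases mul_eq_zero.1 h with h | h
          · exact absurd h n12
          · linarith [sub_eq_zero.1 h]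
        have hQ : ε₁*x + ε₂*y = ε₁*ε₂ := by linear_combination F1 - ε₁ * hS
        have : y * (ε₂ - ε₁) = -(ε₁ * (ε₃ - ε₂)) := by linear_combination hQ - ε₁ * hS
        nlinarith [mul_nonneg hy (le_of_lt (sub_pos.2 h₁₂)), mul_pos h₀ (sub_pos.2 h₂₃)]
      · exfalso
        have hS3 : x + y + z = ε₃ := by
          have h : (ε₁ - ε₂) * ((x + y + z) - ε₃) = 0 := by linear_combination F1 - F2
          rcases mul_eq_zero.1 h with h | h
          · exact absurd h n12
          · linarith [sub_eq_zero.1 h]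
        have hS2 : x + y + z = ε₂ := by
          have h : (ε₁ - ε₃) * ((x + y + z) - ε₂) = 0 := by linear_combination F1 - F3
          rcases mul_eq_zero.1 h with h | h
          · exact absurd h n13
          · linarith [sub_eq_zero.1 h]
        linarith

lemma fresnel_char (ε₁ ε₂ ε₃ : ℝ) (h₀ : 0 < ε₁) (h₁₂ : ε₁ < ε₂) (h₂₃ : ε₂ < ε₃)
    (η : Fin 3 → ℝ) :
    (fresnelN ε₁ ε₂ ε₃ η = 0 ∧ fderiv ℝ (fresnelN ε₁ ε₂ ε₃) η = 0) ↔
      (η 1 = 0 ∧ (η 0) ^ 2 = ε₃ * (ε₁ - ε₂) / (ε₁ - ε₃)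
        ∧ (η 2) ^ 2 = ε₁ * (ε₃ - ε₂) / (ε₃ - ε₁)) := by
  have h02 : 0 < ε₂ := h₀.trans h₁₂
  have h03 : 0 < ε₃ := h02.trans h₂₃
  have h13 : ε₁ < ε₃ := h₁₂.trans h₂₃
  have h01 : ε₁ ≠ 0 := h₀.ne'
  have h02' : ε₂ ≠ 0 := h02.ne'
  have h03' : ε₃ ≠ 0 := h03.ne'
  have n13 : ε₁ - ε₃ ≠ 0 := sub_ne_zero.mpr h13.ne
  have n31 : ε₃ - ε₁ ≠ 0 := sub_ne_zero.mpr h13.ne'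
  constructor
  · rintro ⟨hf, hd⟩
    have hv : ∀ v : Fin 3 → ℝ,
        (2 * η 0 * (-(1/ε₂ + 1/ε₃) + (ε₁*((η 0)^2+(η 1)^2+(η 2)^2) + (ε₁*(η 0)^2+ε₂*(η 1)^2+ε₃*(η 2)^2))/(ε₁*ε₂*ε₃))) * v 0
      + (2 * η 1 * (-(1/ε₁ + 1/ε₃) + (ε₂*((η 0)^2+(η 1)^2+(η 2)^2) + (ε₁*(η 0)^2+ε₂*(η 1)^2+ε₃*(η 2)^2))/(ε₁*ε₂*ε₃))) * v 1
      + (2 * η 2 * (-(1/ε₁ + 1/ε₂) + (ε₃*((η 0)^2+(η 1)^2+(η 2)^2) + (ε₁*(η 0)^2+ε₂*(η 1)^2+ε₃*(η 2)^2))/(ε₁*ε₂*ε₃))) * v 2 = 0 := by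
      intro v
      rw [← fresnel_fderiv_apply, hd]
      rfl
    have g0 := hv ![1,0,0]
    have g1 := hv ![0,1,0]
    have g2 := hv ![0,0,1]
    simp only [Matrix.cons_val_zero, Matrix.cons_val_one, Matrix.head_cons, mul_one, mul_zero,
      add_zero, zero_add, Matrix.cons_val_two, Matrix.tail_cons] at g0 g1 g2
    have e1 : η 0 = 0 ∨ ε₁*((η 0)^2+(η 1)^2+(η 2)^2) + (ε₁*(η 0)^2+ε₂*(η 1)^2+ε₃*(η 2)^2) = ε₁*(ε₂+ε₃) := by
      rcases mul_eq_zero.1 g0 with h | h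
      · left; linarith
      · right
        field_simp at h
        have h' : (ε₂*ε₃) * (ε₁*((η 0)^2+(η 1)^2+(η 2)^2) + (ε₁*(η 0)^2+ε₂*(η 1)^2+ε₃*(η 2)^2) - ε₁*(ε₂+ε₃)) = 0 := by
          linear_combination (ε₂*ε₃) * h
        rcases mul_eq_zero.1 h' with h'' | h''
        · exact absurd h'' (mul_ne_zero h02' h03')
        · linarith
    have e2 : η 1 = 0 ∨ ε₂*((η 0)^2+(η 1)^2+(η 2)^2) + (ε₁*(η 0)^2+ε₂*(η 1)^2+ε₃*(η 2)^2) = ε₂*(ε₁+ε₃) := by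
      rcases mul_eq_zero.1 g1 with h | h
      · left; linarith
      · right
        field_simp at h
        have h' : (ε₁*ε₃) * (ε₂*((η 0)^2+(η 1)^2+(η 2)^2) + (ε₁*(η 0)^2+ε₂*(η 1)^2+ε₃*(η 2)^2) - ε₂*(ε₁+ε₃)) = 0 := by
          linear_combination (ε₁*ε₃) * h
        rcases mul_eq_zero.1 h' with h'' | h''
        · exact absurd h'' (mul_ne_zero h01 h03')
        · linarith
    have e3 : η 2 = 0 ∨ ε₃*((η 0)^2+(η 1)^2+(η 2)^2) + (ε₁*(η 0)^2+ε₂*(η 1)^2+ε₃*(η 2)^2) = ε₃*(ε₁+ε₂) := by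
      rcases mul_eq_zero.1 g2 with h | h
      · left; linarith
      · right
        field_simp at h
        have h' : (ε₁*ε₂) * (ε₃*((η 0)^2+(η 1)^2+(η 2)^2) + (ε₁*(η 0)^2+ε₂*(η 1)^2+ε₃*(η 2)^2) - ε₃*(ε₁+ε₂)) = 0 := by
          linear_combination (ε₁*ε₂) * h
        rcases mul_eq_zero.1 h' with h'' | h''
        · exact absurd h'' (mul_ne_zero h01 h02')
        · linarith
    unfold fresnelN at hf
    field_simp at hf
    have hN : ε₁*ε₂*ε₃ - ((η 0)^2*ε₁*(ε₂+ε₃) + (η 1)^2*ε₂*(ε₁+ε₃) + (η 2)^2*ε₃*(ε₁+ε₂))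
        + (ε₁*(η 0)^2+ε₂*(η 1)^2+ε₃*(η 2)^2)*((η 0)^2+(η 1)^2+(η 2)^2) = 0 := by
      have h' : (ε₁*ε₂*ε₃)^2 * (ε₁*ε₂*ε₃ - ((η 0)^2*ε₁*(ε₂+ε₃) + (η 1)^2*ε₂*(ε₁+ε₃) + (η 2)^2*ε₃*(ε₁+ε₂))
        + (ε₁*(η 0)^2+ε₂*(η 1)^2+ε₃*(η 2)^2)*((η 0)^2+(η 1)^2+(η 2)^2)) = 0 := by
        linear_combination (ε₁*ε₂*ε₃)^2 * hf
      rcases mul_eq_zero.1 h' with h'' | h''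
      · exact absurd h'' (pow_ne_zero _ (by positivity))
      · linarith
    have key := fresnel_core ε₁ ε₂ ε₃ ((η 0)^2) ((η 1)^2) ((η 2)^2) h₀ h₁₂ h₂₃
      (sq_nonneg _) (sq_nonneg _) (sq_nonneg _)
      (by linear_combination hN)
      (e1.imp (fun h => by rw [h]; norm_num) id)
      (e2.imp (fun h => by rw [h]; norm_num) id)
      (e3.imp (fun h => by rw [h]; norm_num) id)
    refine ⟨?_, key.2.1, key.2.2⟩
    exact pow_eq_zero_iff (n := 2) (by norm_num) |>.1 key.1
  · rintro ⟨h1, hA, hB⟩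
    have hS : (η 0)^2 + (η 1)^2 + (η 2)^2 = ε₂ := by
      rw [h1, hA, hB]
      field_simp
      ring
    have hQ : ε₁*(η 0)^2 + ε₂*(η 1)^2 + ε₃*(η 2)^2 = ε₁*ε₃ := by
      rw [h1, hA, hB]
      field_simp
      ring
    constructor
    · unfold fresnelN
      rw [show ε₁ * (η 0) ^ 2 + ε₂ * (η 1) ^ 2 + ε₃ * (η 2) ^ 2 = ε₁*ε₃ from by
          linear_combination hQ,
        show (η 0) ^ 2 + (η 1) ^ 2 + (η 2) ^ 2 = ε₂ from by linear_combination hS,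
        h1, hA, hB]
      field_simp
      ring
    · ext v
      rw [fresnel_fderiv_apply,
        show ε₁*((η 0)^2+(η 1)^2+(η 2)^2) + (ε₁*(η 0)^2+ε₂*(η 1)^2+ε₃*(η 2)^2)
            = ε₁*ε₂ + ε₁*ε₃ from by linear_combination ε₁ * hS + hQ,
        show ε₂*((η 0)^2+(η 1)^2+(η 2)^2) + (ε₁*(η 0)^2+ε₂*(η 1)^2+ε₃*(η 2)^2)
            = ε₂*ε₂ + ε₁*ε₃ from by linear_combination ε₂ * hS + hQ,
        show ε₃*((η 0)^2+(η 1)^2+(η 2)^2) + (ε₁*(η 0)^2+ε₂*(η 1)^2+ε₃*(η 2)^2)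
            = ε₃*ε₂ + ε₁*ε₃ from by linear_combination ε₃ * hS + hQ,
        h1]
      simp only [ContinuousLinearMap.zero_apply]
      field_simp
      ring

/-- Characterization of the singular points of the Fresnel surface: a point `η` satisfies
`𝒩(η) = 0` and `∇𝒩(η) = 0` if and only if `η₂ = 0`, `η₁² = ε₃(ε₁-ε₂)/(ε₁-ε₃)` and
`η₃² = ε₁(ε₃-ε₂)/(ε₃-ε₁)`; in particular there are exactly four singular points. -/
theorem stmt3 (ε₁ ε₂ ε₃ : ℝ) (h₀ : 0 < ε₁) (h₁₂ : ε₁ < ε₂) (h₂₃ : ε₂ < ε₃) :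
    (∀ η : Fin 3 → ℝ,
      (fresnelN ε₁ ε₂ ε₃ η = 0 ∧ fderiv ℝ (fresnelN ε₁ ε₂ ε₃) η = 0) ↔
        (η 1 = 0 ∧ (η 0) ^ 2 = ε₃ * (ε₁ - ε₂) / (ε₁ - ε₃)
          ∧ (η 2) ^ 2 = ε₁ * (ε₃ - ε₂) / (ε₃ - ε₁))) ∧
    {η : Fin 3 → ℝ |
        fresnelN ε₁ ε₂ ε₃ η = 0 ∧ fderiv ℝ (fresnelN ε₁ ε₂ ε₃) η = 0}.ncard = 4 := by
  have h02 : 0 < ε₂ := h₀.trans h₁₂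
  have h03 : 0 < ε₃ := h02.trans h₂₃
  have h13 : ε₁ < ε₃ := h₁₂.trans h₂₃
  have hchar := fresnel_char ε₁ ε₂ ε₃ h₀ h₁₂ h₂₃
  refine ⟨hchar, ?_⟩
  set A := ε₃ * (ε₁ - ε₂) / (ε₁ - ε₃) with hAdef
  set B := ε₁ * (ε₃ - ε₂) / (ε₃ - ε₁) with hBdef
  have hA : 0 < A := div_pos_of_neg_of_neg (by nlinarith) (by linarith)
  have hB : 0 < B := div_pos (by nlinarith) (by linarith)
  set sa := Real.sqrt A with hsadef
  set sb := Real.sqrt B with hsbdef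
  have hsa : 0 < sa := Real.sqrt_pos.mpr hA
  have hsb : 0 < sb := Real.sqrt_pos.mpr hB
  have hsa2 : sa ^ 2 = A := Real.sq_sqrt hA.le
  have hsb2 : sb ^ 2 = B := Real.sq_sqrt hB.le
  have hset : {η : Fin 3 → ℝ |
        fresnelN ε₁ ε₂ ε₃ η = 0 ∧ fderiv ℝ (fresnelN ε₁ ε₂ ε₃) η = 0}
      = {![sa,0,sb], ![sa,0,-sb], ![-sa,0,sb], ![-sa,0,-sb]} := by
    ext η
    rw [Set.mem_setOf_eq, hchar η]
    constructor
    · rintro ⟨h1, hA', hB'⟩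
      have hη : η = ![η 0, η 1, η 2] := by
        funext i; fin_cases i <;> rfl
      have h0' : η 0 = sa ∨ η 0 = -sa := by
        have h : (η 0) ^ 2 = sa ^ 2 := by rw [hA', hsa2]
        exact sq_eq_sq_iff_eq_or_eq_neg.mp h
      have h2' : η 2 = sb ∨ η 2 = -sb := by
        have h : (η 2) ^ 2 = sb ^ 2 := by rw [hB', hsb2]
        exact sq_eq_sq_iff_eq_or_eq_neg.mp h
      rcases h0' with h | h <;> rcases h2' with h' | h' <;>
        rw [hη, h1, h, h'] <;> simp [Set.mem_insert_iff]
    · intro hη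
      simp only [Set.mem_insert_iff, Set.mem_singleton_iff] at hη
      rcases hη with rfl | rfl | rfl | rfl <;>
        refine ⟨rfl, ?_, ?_⟩ <;>
        simp [hsa2, hsb2, neg_pow]
  rw [hset]
  have d1 : (![sa,0,sb] : Fin 3 → ℝ) ≠ ![sa,0,-sb] := by
    intro h; have := congrFun h 2; simp at this; linarith
  have d2 : (![sa,0,sb] : Fin 3 → ℝ) ≠ ![-sa,0,sb] := by
    intro h; have := congrFun h 0; simp at this; linarith
  have d3 : (![sa,0,sb] : Fin 3 → ℝ) ≠ ![-sa,0,-sb] := by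
    intro h; have := congrFun h 0; simp at this; linarith
  have d4 : (![sa,0,-sb] : Fin 3 → ℝ) ≠ ![-sa,0,sb] := by
    intro h; have := congrFun h 0; simp at this; linarith
  have d5 : (![sa,0,-sb] : Fin 3 → ℝ) ≠ ![-sa,0,-sb] := by
    intro h; have := congrFun h 0; simp at this; linarith
  have d6 : (![-sa,0,sb] : Fin 3 → ℝ) ≠ ![-sa,0,-sb] := by
    intro h; have := congrFun h 2; simp at this; linarith
  rw [Set.ncard_insert_of_notMem (by
      simp only [Set.mem_insert_iff, Set.mem_singleton_iff]
      push_neg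
      exact ⟨d1, d2, d3⟩) (Set.toFinite _),
    Set.ncard_insert_of_notMem (by
      simp only [Set.mem_insert_iff, Set.mem_singleton_iff]
      push_neg
      exact ⟨d4, d5⟩) (Set.toFinite _),
    Set.ncard_pair d6]
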